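/- Let 0 < q < 1, u > 0 and t ∈ ℝ. Set s₀ = |t|^{q−1} if |t| ≥ u^{1/(q−1)} and s₀ = u otherwise, and set h = |t|^q if |t| ≥ u^{1/(q−1)} and h = q·u·|t| + (1−q)·u^{q/(q−1)} otherwise. Then 0 < s₀ ≤ u, h = q(|t|·s₀ − ((q−1)/q)·s₀^{q/(q−1)}), and q(|t|·s − ((q−1)/q)·s^{q/(q−1)}) ≥ h for every s with 0 < s ≤ u; that is, h is the least element of the set { q(|t|·s − ((q−1)/q)·s^{q/(q−1)}) : 0 < s ≤ u }. -/

import Mathlib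

/-- Key convexity inequality: for `0 < q < 1` and `s, b > 0`,
`b ^ (q/(q-1)) ≤ (1-q) * s ^ (q/(q-1)) + q * (b ^ (1/(q-1)) * s)`. -/
lemma key_ineq (q s b : ℝ) (hq0 : 0 < q) (hq1 : q < 1) (hs : 0 < s) (hb : 0 < b) :
    b ^ (q / (q - 1)) ≤ (1 - q) * s ^ (q / (q - 1)) + q * (b ^ (1 / (q - 1)) * s) := by
  have hq1' : q - 1 ≠ 0 := by linarith
  have h := Real.geom_mean_le_arith_mean2_weighted (by linarith : (0:ℝ) ≤ 1 - q) hq0.le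
    (Real.rpow_pos_of_pos hs (q / (q - 1))).le
    (mul_pos (Real.rpow_pos_of_pos hb (1 / (q - 1))) hs).le (by ring)
  have e1 : (s ^ (q / (q - 1))) ^ (1 - q) = s ^ (-q) := by
    rw [← Real.rpow_mul hs.le]
    congr 1
    field_simp
    ring
  have e2 : (b ^ (1 / (q - 1)) * s) ^ q = b ^ (q / (q - 1)) * s ^ q := by
    rw [Real.mul_rpow (Real.rpow_pos_of_pos hb _).le hs.le, ← Real.rpow_mul hb.le]
    congr 2
    field_simp
  have e3 : s ^ (-q) * (b ^ (q / (q - 1)) * s ^ q) = b ^ (q / (q - 1)) := by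
    rw [mul_comm (b ^ (q / (q - 1))) (s ^ q), ← mul_assoc, ← Real.rpow_add hs,
      neg_add_cancel, Real.rpow_zero, one_mul]
  calc b ^ (q / (q - 1)) = s ^ (-q) * (b ^ (q / (q - 1)) * s ^ q) := e3.symm
    _ = (s ^ (q / (q - 1))) ^ (1 - q) * (b ^ (1 / (q - 1)) * s) ^ q := by rw [e1, e2]
    _ ≤ (1 - q) * s ^ (q / (q - 1)) + q * (b ^ (1 / (q - 1)) * s) := h

/-- h_u(t) is the least value of s ↦ q(|t|s − ((q−1)/q)s^{q/(q−1)})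
over 0 < s ≤ u, attained at s₀. -/
theorem hApprox_is_min (q u t : ℝ) (hq0 : 0 < q) (hq1 : q < 1) (hu : 0 < u)
    (s₀ h : ℝ)
    (hs₀ : s₀ = if u ^ (1 / (q - 1)) ≤ |t| then |t| ^ (q - 1) else u)
    (hh : h = if u ^ (1 / (q - 1)) ≤ |t| then |t| ^ q
              else q * u * |t| + (1 - q) * u ^ (q / (q - 1))) :
    0 < s₀ ∧ s₀ ≤ u ∧
    h = q * (|t| * s₀ - ((q - 1) / q) * s₀ ^ (q / (q - 1))) ∧
    ∀ s : ℝ, 0 < s → s ≤ u →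
      h ≤ q * (|t| * s - ((q - 1) / q) * s ^ (q / (q - 1))) := by
  have hq1' : q - 1 ≠ 0 := by linarith
  have hqne : q ≠ 0 := hq0.ne'
  by_cases hc : u ^ (1 / (q - 1)) ≤ |t|
  · rw [if_pos hc] at hs₀ hh
    have hat : 0 < |t| := lt_of_lt_of_le (Real.rpow_pos_of_pos hu _) hc
    have hs₀pos : 0 < s₀ := hs₀ ▸ Real.rpow_pos_of_pos hat _
    have hs₀u : s₀ ≤ u := by
      rw [hs₀]
      calc |t| ^ (q - 1) ≤ (u ^ (1 / (q - 1))) ^ (q - 1) :=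
            Real.rpow_le_rpow_of_nonpos (Real.rpow_pos_of_pos hu _) hc (by linarith)
        _ = u := by
            rw [← Real.rpow_mul hu.le, one_div_mul_cancel hq1', Real.rpow_one]
    have e2 : s₀ ^ (q / (q - 1)) = |t| ^ q := by
      rw [hs₀, ← Real.rpow_mul hat.le]
      congr 1
      field_simp
    have e3 : s₀ ^ (1 / (q - 1)) = |t| := by
      rw [hs₀, ← Real.rpow_mul hat.le, mul_one_div, div_self hq1', Real.rpow_one]
    refine ⟨hs₀pos, hs₀u, ?_, ?_⟩
    · have e1 : |t| * s₀ = |t| ^ q := by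
        nth_rewrite 1 [← Real.rpow_one |t|]
        rw [hs₀, ← Real.rpow_add hat]
        congr 1
        ring
      rw [hh, e1, e2]
      field_simp
      ring
    · intro s hs _
      have k := key_ineq q s s₀ hq0 hq1 hs hs₀pos
      rw [e2, e3] at k
      rw [hh]
      calc |t| ^ q ≤ (1 - q) * s ^ (q / (q - 1)) + q * (|t| * s) := k
        _ = q * (|t| * s - (q - 1) / q * s ^ (q / (q - 1))) := by
            field_simp
            ring
  · rw [if_neg hc] at hs₀ hh
    push_neg at hc
    have hc' : |t| ≤ u ^ (1 / (q - 1)) := hc.le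
    refine ⟨hs₀ ▸ hu, hs₀ ▸ le_refl u, by rw [hh, hs₀]; field_simp; ring, ?_⟩
    intro s hs hsu
    have k := key_ineq q s u hq0 hq1 hs hu
    have hcu : u ^ (q / (q - 1)) = u ^ (1 / (q - 1)) * u := by
      rw [show q / (q - 1) = 1 / (q - 1) + 1 by field_simp; ring, Real.rpow_add hu, Real.rpow_one]
    have rhs_eq : q * (|t| * s - (q - 1) / q * s ^ (q / (q - 1)))
        = q * |t| * s + (1 - q) * s ^ (q / (q - 1)) := by
      field_simp
      ring
    rw [hh, rhs_eq]
    nlinarith [k, hcu, mul_nonneg (mul_nonneg hq0.le (sub_nonneg.2 hc'))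
      (sub_nonneg.2 hsu)]
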